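/- Let H be a complex Hilbert space, let {P_a}_{a=1}^c and {Q_b}_{b=1}^c be PVMs with c outputs in M_n(B(H)) (each P_a = (P_{a,ij}) and Q_b = (Q_{b,kl}) a self-adjoint idempotent on H^n, with Σ_a P_a and Σ_b Q_b equal to the identity of H^n), whose entries commute (P_{a,ij} Q_{b,kl} = Q_{b,kl} P_{a,ij} for all indices), and let ψ ∈ H be a unit vector. Suppose the associated correlation is synchronous, i.e. Σ_{i,j=1}^n ⟨P_{a,ij} Q_{b,ij} ψ, ψ⟩ = 0 for all a ≠ b. Then Q_{a,ij} ψ = (P_{a,ij})* ψ for all 1 ≤ a ≤ c and 1 ≤ i, j ≤ n. -/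

import Mathlib

open scoped ENNReal

set_option synthInstance.maxHeartbeats 1000000
set_option maxHeartbeats 1000000

noncomputable section

instance piLpCompleteSpace {ι : Type*} (p : ℝ≥0∞) (β : ι → Type*)
    [∀ i, UniformSpace (β i)] [∀ i, CompleteSpace (β i)] : CompleteSpace (PiLp p β) :=
  (PiLp.uniformEquiv p β).completeSpace_iff.2 (Pi.complete β)

/-- The isometric embedding of `E` onto the `i`-th coordinate of the
ℓ²-direct sum of `n` copies of `E`. -/
def inclPi (E : Type*) [NormedAddCommGroup E] [InnerProductSpace ℂ E]
    (n : ℕ) (i : Fin n) : E →L[ℂ] PiLp 2 (fun _ : Fin n => E) :=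
  (PiLp.continuousLinearEquiv 2 ℂ (fun _ : Fin n => E)).symm.toContinuousLinearMap.comp
    (ContinuousLinearMap.pi fun j => if j = i then ContinuousLinearMap.id ℂ E else 0)

/-- The continuous linear projection onto the `i`-th coordinate of the
ℓ²-direct sum of `n` copies of `E`. -/
def projPi (E : Type*) [NormedAddCommGroup E] [InnerProductSpace ℂ E]
    (n : ℕ) (i : Fin n) : PiLp 2 (fun _ : Fin n => E) →L[ℂ] E :=
  (ContinuousLinearMap.proj i).comp
    (PiLp.continuousLinearEquiv 2 ℂ (fun _ : Fin n => E)).toContinuousLinearMap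

/-- The operator on the ℓ²-direct sum `E^n` associated to an `n × n` matrix of bounded
operators on `E`, acting by `(T ξ) i = ∑ j, T i j (ξ j)`. -/
def matToOp {E : Type*} [NormedAddCommGroup E] [InnerProductSpace ℂ E] {n : ℕ}
    (T : Matrix (Fin n) (Fin n) (E →L[ℂ] E)) :
    PiLp 2 (fun _ : Fin n => E) →L[ℂ] PiLp 2 (fun _ : Fin n => E) :=
  ∑ i, ∑ j, (inclPi E n i).comp ((T i j).comp (projPi E n j))

section helpers

variable {E : Type*} [NormedAddCommGroup E] [InnerProductSpace ℂ E] {n : ℕ}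

lemma piLp_sum_apply {κ : Type*} (s : Finset κ) (f : κ → PiLp 2 (fun _ : Fin n => E))
    (i : Fin n) : (∑ k ∈ s, f k) i = ∑ k ∈ s, f k i := by
  classical
  induction s using Finset.induction with
  | empty => simp [PiLp.zero_apply]
  | insert a s h ih => simp [Finset.sum_insert h, PiLp.add_apply, ih]

lemma inclPi_apply (i j : Fin n) (x : E) : inclPi E n i x j = if j = i then x else 0 := by
  simp [inclPi]
  split <;> simp

lemma projPi_apply (i : Fin n) (ξ : PiLp 2 (fun _ : Fin n => E)) : projPi E n i ξ = ξ i := rfl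

lemma matToOp_apply (T : Matrix (Fin n) (Fin n) (E →L[ℂ] E)) (ξ : PiLp 2 (fun _ : Fin n => E))
    (i : Fin n) : matToOp T ξ i = ∑ j, T i j (ξ j) := by
  simp [matToOp, ContinuousLinearMap.sum_apply, piLp_sum_apply, inclPi_apply, projPi_apply]

lemma matToOp_apply_incl (T : Matrix (Fin n) (Fin n) (E →L[ℂ] E)) (x : E) (i j : Fin n) :
    matToOp T (inclPi E n j x) i = T i j x := by
  simp [matToOp_apply, inclPi_apply, apply_ite]

lemma entry_adjoint [CompleteSpace E] (T : Matrix (Fin n) (Fin n) (E →L[ℂ] E))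
    (hT : IsSelfAdjoint (matToOp T)) (i j : Fin n) (x y : E) :
    (inner ℂ ((T i j) x) y : ℂ) = inner ℂ x ((T j i) y) := by
  have hadj := ContinuousLinearMap.isSelfAdjoint_iff'.mp hT
  have key : (inner ℂ (matToOp T (inclPi E n j x)) (inclPi E n i y) : ℂ)
      = inner ℂ (inclPi E n j x) (matToOp T (inclPi E n i y)) := by
    conv_lhs => rw [← hadj]
    exact ContinuousLinearMap.adjoint_inner_left _ _ _
  rw [PiLp.inner_apply, PiLp.inner_apply] at key
  simp only [matToOp_apply_incl, inclPi_apply] at key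
  have e1 : ∀ k : Fin n, (inner ℂ ((T k j) x) (if k = i then y else 0) : ℂ)
      = if k = i then inner ℂ ((T i j) x) y else 0 := by
    intro k; by_cases h : k = i
    · subst h; simp
    · simp [h]
  have e2 : ∀ k : Fin n, (inner ℂ (if k = j then x else 0) ((T k i) y) : ℂ)
      = if k = j then inner ℂ x ((T j i) y) else 0 := by
    intro k; by_cases h : k = j
    · subst h; simp
    · simp [h]
  rw [Finset.sum_congr rfl (fun k _ => e1 k), Finset.sum_congr rfl (fun k _ => e2 k)] at key
  simpa using key

lemma entry_idem (T : Matrix (Fin n) (Fin n) (E →L[ℂ] E))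
    (hT : (matToOp T).comp (matToOp T) = matToOp T) (i j : Fin n) (x : E) :
    ∑ k, T i k (T k j x) = T i j x := by
  have h : matToOp T (matToOp T (inclPi E n j x)) i = matToOp T (inclPi E n j x) i := by
    rw [← ContinuousLinearMap.comp_apply, hT]
  rw [matToOp_apply_incl] at h
  rw [matToOp_apply] at h
  simpa [matToOp_apply_incl] using h

lemma entry_sum {c : ℕ} (P : Fin c → Matrix (Fin n) (Fin n) (E →L[ℂ] E))
    (h : ∑ a, matToOp (P a) = 1) (i j : Fin n) (x : E) :
    ∑ a, P a i j x = if i = j then x else 0 := by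
  have h1 : (∑ a, matToOp (P a)) (inclPi E n j x) i = (inclPi E n j x) i := by
    rw [h]; rfl
  rw [ContinuousLinearMap.sum_apply, piLp_sum_apply] at h1
  simp only [matToOp_apply_incl, inclPi_apply] at h1
  exact h1

end helpers

/-- **Theorem (synchronicity condition, part 1).**  Let `{P_a}` and `{Q_b}` be PVMs with `c`
outputs in `M_n(B(H))` with mutually commuting entries and let `ψ ∈ H` be a unit vector such
that the associated correlation is synchronous, i.e.
`∑_{i,j=1}^n ⟨P_{a,ij} Q_{b,ij} ψ, ψ⟩ = 0` for all `a ≠ b`.  Then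
`Q_{a,ij} ψ = (P_{a,ij})* ψ` for all `1 ≤ a ≤ c` and `1 ≤ i,j ≤ n`. -/
theorem synchronous_vector_condition {H : Type*} [NormedAddCommGroup H]
    [InnerProductSpace ℂ H] [CompleteSpace H] (n c : ℕ)
    (P Q : Fin c → Matrix (Fin n) (Fin n) (H →L[ℂ] H))
    (hPadj : ∀ a, IsSelfAdjoint (matToOp (P a)))
    (hPidem : ∀ a, (matToOp (P a)).comp (matToOp (P a)) = matToOp (P a))
    (hPsum : ∑ a, matToOp (P a) = 1)
    (hQadj : ∀ b, IsSelfAdjoint (matToOp (Q b)))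
    (hQidem : ∀ b, (matToOp (Q b)).comp (matToOp (Q b)) = matToOp (Q b))
    (hQsum : ∑ b, matToOp (Q b) = 1)
    (hcomm : ∀ a b i j k l, (P a i j).comp (Q b k l) = (Q b k l).comp (P a i j))
    (ψ : H) (hψ : ‖ψ‖ = 1)
    (hsync : ∀ a b : Fin c, a ≠ b →
      ∑ i, ∑ j, (inner ℂ ψ ((P a i j) ((Q b i j) ψ)) : ℂ) = 0) :
    ∀ a i j, (Q a i j) ψ = (ContinuousLinearMap.adjoint (P a i j)) ψ := by
  
  classical
  have hψ1 : (inner ℂ ψ ψ : ℂ) = 1 := by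
    rw [inner_self_eq_norm_sq_to_K, hψ]; norm_num
  have hP : ∀ a (i j : Fin n) (x y : H),
      (inner ℂ ((P a i j) x) y : ℂ) = inner ℂ x ((P a j i) y) :=
    fun a i j => entry_adjoint (P a) (hPadj a) i j
  have hQ : ∀ a (i j : Fin n) (x y : H),
      (inner ℂ ((Q a i j) x) y : ℂ) = inner ℂ x ((Q a j i) y) :=
    fun a i j => entry_adjoint (Q a) (hQadj a) i j
  have hPadjop : ∀ a (i j : Fin n), P a j i = ContinuousLinearMap.adjoint (P a i j) := by
    intro a i j
    rw [ContinuousLinearMap.eq_adjoint_iff]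
    exact hP a j i
  -- ∑_a ∑_i ∑_j ⟪Q_{a,ij}ψ, Q_{a,ij}ψ⟫ = n
  have hQQ : (∑ a, ∑ i : Fin n, ∑ j : Fin n, (inner ℂ (Q a i j ψ) (Q a i j ψ) : ℂ)) = (n : ℂ) := by
    have e1 : ∀ a (i j : Fin n), (inner ℂ (Q a i j ψ) (Q a i j ψ) : ℂ)
        = inner ℂ ψ ((Q a j i) ((Q a i j) ψ)) := fun a i j => hQ a i j ψ _
    simp only [e1]
    have e2 : ∀ a (j : Fin n), (∑ i : Fin n, (inner ℂ ψ ((Q a j i) ((Q a i j) ψ)) : ℂ))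
        = inner ℂ ψ ((Q a j j) ψ) := by
      intro a j
      rw [← inner_sum, entry_idem (Q a) (hQidem a) j j ψ]
    calc ∑ a, ∑ i : Fin n, ∑ j : Fin n, (inner ℂ ψ ((Q a j i) ((Q a i j) ψ)) : ℂ)
        = ∑ a, ∑ j : Fin n, ∑ i : Fin n, (inner ℂ ψ ((Q a j i) ((Q a i j) ψ)) : ℂ) :=
          Finset.sum_congr rfl fun a _ => Finset.sum_comm
      _ = ∑ a, ∑ j : Fin n, (inner ℂ ψ ((Q a j j) ψ) : ℂ) :=
          Finset.sum_congr rfl fun a _ => Finset.sum_congr rfl fun j _ => e2 a j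
      _ = ∑ j : Fin n, ∑ a, (inner ℂ ψ ((Q a j j) ψ) : ℂ) := Finset.sum_comm
      _ = ∑ _j : Fin n, (inner ℂ ψ ψ : ℂ) := by
          refine Finset.sum_congr rfl fun j _ => ?_
          rw [← inner_sum, entry_sum Q hQsum j j ψ, if_pos rfl]
      _ = (n : ℂ) := by simp [hψ1, hψ]
  -- ∑_a ∑_i ∑_j ⟪P_{a,ji}ψ, P_{a,ji}ψ⟫ = n
  have hPP : (∑ a, ∑ i : Fin n, ∑ j : Fin n, (inner ℂ (P a j i ψ) (P a j i ψ) : ℂ)) = (n : ℂ) := by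
    have e1 : ∀ a (i j : Fin n), (inner ℂ (P a j i ψ) (P a j i ψ) : ℂ)
        = inner ℂ ψ ((P a i j) ((P a j i) ψ)) := fun a i j => hP a j i ψ _
    simp only [e1]
    have e2 : ∀ a (i : Fin n), (∑ j : Fin n, (inner ℂ ψ ((P a i j) ((P a j i) ψ)) : ℂ))
        = inner ℂ ψ ((P a i i) ψ) := by
      intro a i
      rw [← inner_sum, entry_idem (P a) (hPidem a) i i ψ]
    calc ∑ a, ∑ i : Fin n, ∑ j : Fin n, (inner ℂ ψ ((P a i j) ((P a j i) ψ)) : ℂ)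
        = ∑ a, ∑ i : Fin n, (inner ℂ ψ ((P a i i) ψ) : ℂ) :=
          Finset.sum_congr rfl fun a _ => Finset.sum_congr rfl fun i _ => e2 a i
      _ = ∑ i : Fin n, ∑ a, (inner ℂ ψ ((P a i i) ψ) : ℂ) := Finset.sum_comm
      _ = ∑ _i : Fin n, (inner ℂ ψ ψ : ℂ) := by
          refine Finset.sum_congr rfl fun i _ => ?_
          rw [← inner_sum, entry_sum P hPsum i i ψ, if_pos rfl]
      _ = (n : ℂ) := by simp [hψ1, hψ]
  -- the synchronous diagonal sum equals n
  have hdiag : (∑ a, ∑ i : Fin n, ∑ j : Fin n,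
      (inner ℂ ψ ((P a i j) ((Q a i j) ψ)) : ℂ)) = (n : ℂ) := by
    have swapab : ∀ a, (∑ i : Fin n, ∑ j : Fin n, (inner ℂ ψ ((P a i j) ((Q a i j) ψ)) : ℂ))
        = ∑ b, ∑ i : Fin n, ∑ j : Fin n, (inner ℂ ψ ((P a i j) ((Q b i j) ψ)) : ℂ) := by
      intro a
      rw [Finset.sum_eq_single a]
      · intro b _ hb
        exact hsync a b (Ne.symm hb)
      · intro h; exact absurd (Finset.mem_univ a) h
    have cell : ∀ (i j : Fin n), (∑ a, ∑ b, (inner ℂ ψ ((P a i j) ((Q b i j) ψ)) : ℂ))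
        = if i = j then 1 else 0 := by
      intro i j
      have t1 : ∀ a, (∑ b, (inner ℂ ψ ((P a i j) ((Q b i j) ψ)) : ℂ))
          = inner ℂ ψ ((P a i j) (if i = j then ψ else 0)) := by
        intro a
        rw [← inner_sum, ← map_sum, entry_sum Q hQsum i j ψ]
      simp only [t1]
      rw [← inner_sum]
      by_cases h : i = j
      · simp only [if_pos h]
        rw [entry_sum P hPsum i j ψ, if_pos h, hψ1]
      · simp only [if_neg h]
        simp
    calc ∑ a, ∑ i : Fin n, ∑ j : Fin n, (inner ℂ ψ ((P a i j) ((Q a i j) ψ)) : ℂ)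
        = ∑ a, ∑ b, ∑ i : Fin n, ∑ j : Fin n, (inner ℂ ψ ((P a i j) ((Q b i j) ψ)) : ℂ) :=
          Finset.sum_congr rfl fun a _ => swapab a
      _ = ∑ a, ∑ i : Fin n, ∑ b, ∑ j : Fin n, (inner ℂ ψ ((P a i j) ((Q b i j) ψ)) : ℂ) :=
          Finset.sum_congr rfl fun a _ => Finset.sum_comm
      _ = ∑ a, ∑ i : Fin n, ∑ j : Fin n, ∑ b, (inner ℂ ψ ((P a i j) ((Q b i j) ψ)) : ℂ) :=
          Finset.sum_congr rfl fun a _ => Finset.sum_congr rfl fun i _ => Finset.sum_comm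
      _ = ∑ i : Fin n, ∑ a, ∑ j : Fin n, ∑ b, (inner ℂ ψ ((P a i j) ((Q b i j) ψ)) : ℂ) :=
          Finset.sum_comm
      _ = ∑ i : Fin n, ∑ j : Fin n, ∑ a, ∑ b, (inner ℂ ψ ((P a i j) ((Q b i j) ψ)) : ℂ) :=
          Finset.sum_congr rfl fun i _ => Finset.sum_comm
      _ = ∑ i : Fin n, ∑ j : Fin n, (if i = j then (1 : ℂ) else 0) :=
          Finset.sum_congr rfl fun i _ => Finset.sum_congr rfl fun j _ => cell i j
      _ = (n : ℂ) := by simp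
  -- cross terms
  have hPQ : (∑ a, ∑ i : Fin n, ∑ j : Fin n,
      (inner ℂ (P a j i ψ) (Q a i j ψ) : ℂ)) = (n : ℂ) := by
    have e1 : ∀ a (i j : Fin n), (inner ℂ (P a j i ψ) (Q a i j ψ) : ℂ)
        = inner ℂ ψ ((P a i j) ((Q a i j) ψ)) := fun a i j => hP a j i ψ _
    simp only [e1]
    exact hdiag
  have hQP : (∑ a, ∑ i : Fin n, ∑ j : Fin n,
      (inner ℂ (Q a i j ψ) (P a j i ψ) : ℂ)) = (n : ℂ) := by
    have e1 : ∀ a (i j : Fin n), (inner ℂ (Q a i j ψ) (P a j i ψ) : ℂ)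
        = (starRingEnd ℂ) (inner ℂ (P a j i ψ) (Q a i j ψ)) := fun a i j =>
      (inner_conj_symm _ _).symm
    simp only [e1, ← map_sum]
    rw [hPQ]
    simp
  -- total expansion is zero
  have htotal : (∑ a, ∑ i : Fin n, ∑ j : Fin n,
      (inner ℂ (Q a i j ψ - P a j i ψ) (Q a i j ψ - P a j i ψ) : ℂ)) = 0 := by
    have expand : ∀ a (i j : Fin n),
        (inner ℂ (Q a i j ψ - P a j i ψ) (Q a i j ψ - P a j i ψ) : ℂ)
        = inner ℂ (Q a i j ψ) (Q a i j ψ) - inner ℂ (Q a i j ψ) (P a j i ψ)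
          - inner ℂ (P a j i ψ) (Q a i j ψ) + inner ℂ (P a j i ψ) (P a j i ψ) :=
      fun a i j => inner_sub_sub_self _ _
    simp only [expand, Finset.sum_add_distrib, Finset.sum_sub_distrib]
    rw [hQQ, hPP, hPQ, hQP]
    ring
  -- pass to real norms
  have hterm : ∀ a (i j : Fin n),
      (inner ℂ (Q a i j ψ - P a j i ψ) (Q a i j ψ - P a j i ψ) : ℂ)
      = ((‖Q a i j ψ - P a j i ψ‖ ^ 2 : ℝ) : ℂ) := by
    intro a i j
    rw [inner_self_eq_norm_sq_to_K]
    norm_cast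
  simp only [hterm] at htotal
  have hre : (∑ a, ∑ i : Fin n, ∑ j : Fin n, ‖Q a i j ψ - P a j i ψ‖ ^ 2) = (0 : ℝ) := by
    exact_mod_cast htotal
  intro a i j
  have t1 := (Finset.sum_eq_zero_iff_of_nonneg (fun a _ =>
    Finset.sum_nonneg fun i _ => Finset.sum_nonneg fun j _ => sq_nonneg _)).mp hre a
    (Finset.mem_univ a)
  have t2 := (Finset.sum_eq_zero_iff_of_nonneg (fun i _ =>
    Finset.sum_nonneg fun j _ => sq_nonneg _)).mp t1 i (Finset.mem_univ i)
  have t3 := (Finset.sum_eq_zero_iff_of_nonneg (fun j _ => sq_nonneg _)).mp t2 j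
    (Finset.mem_univ j)
  have t4 : Q a i j ψ - P a j i ψ = 0 := by
    have := pow_eq_zero_iff (n := 2) (by norm_num) |>.mp t3
    exact norm_eq_zero.mp this
  rw [← hPadjop a i j]
  exact sub_eq_zero.mp t4
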